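/- arXiv:1301.2212 — 3 statements merged into one kernel-verified Lean document; each statement's English description precedes it below -/
import Mathlib

section
/- Suppose $F_X=F_Y=F$ is a known continuous strictly increasing distribution function, and $X,Y$ have joint law given by a strict Archimedean copula with generator $\varphi\in\Omega_1=\{\varphi\in\Omega : \varphi(0)=\infty,\ \lim_{t\uparrow 1}\varphi'(t)<0\}$. Then the copula is identifiable from the law of $(Z,\Delta)=(\min(X,Y),\mathbf{1}_{X\le Y})$: if two copulas generated by elements of $\Omega_1$ give the same distribution function $H$ of $Z$, they are equal. -/
open Set Filter


/-- A convex nonneg decreasing function with `φ 1 = 0` tends to `0` at `1⁻`. -/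
lemma gen_tendsto_zero (φ : ℝ → ℝ) (hconv : ConvexOn ℝ (Ioc (0:ℝ) 1) φ)
    (hφ1 : φ 1 = 0) (hnn : ∀ t ∈ Ioc (0:ℝ) 1, 0 ≤ φ t) :
    Tendsto φ (nhdsWithin 1 (Iio (1:ℝ))) (nhds 0) := by
  have hmem : Ioo (1/2 : ℝ) 1 ∈ nhdsWithin (1:ℝ) (Iio (1:ℝ)) :=
    Ioo_mem_nhdsLT_of_mem (by norm_num)
  have hub : ∀ᶠ t in nhdsWithin (1:ℝ) (Iio (1:ℝ)), φ t ≤ 2*(1-t)*φ (1/2) := by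
    filter_upwards [hmem] with t ht
    have h12 : (1/2:ℝ) ∈ Ioc (0:ℝ) 1 := by norm_num
    have h1 : (1:ℝ) ∈ Ioc (0:ℝ) 1 := by norm_num
    have h0a : (0:ℝ) ≤ 2*(1-t) := by linarith [ht.2]
    have h0b : (0:ℝ) ≤ 1 - 2*(1-t) := by linarith [ht.1]
    have hab : 2*(1-t) + (1 - 2*(1-t)) = 1 := by ring
    have := hconv.2 h12 h1 h0a h0b hab
    simp only [smul_eq_mul] at this
    have harg : 2*(1-t) * (1/2) + (1 - 2*(1-t)) * 1 = t := by ring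
    rw [harg, hφ1] at this
    linarith
  have hlb : ∀ᶠ t in nhdsWithin (1:ℝ) (Iio (1:ℝ)), 0 ≤ φ t := by
    filter_upwards [hmem] with t ht
    exact hnn t ⟨by linarith [ht.1], le_of_lt ht.2⟩
  have hg : Tendsto (fun t : ℝ => 2*(1-t)*φ (1/2)) (nhdsWithin 1 (Iio (1:ℝ))) (nhds 0) := by
    have : Tendsto (fun t : ℝ => 2*(1-t)*φ (1/2)) (nhds 1) (nhds (2*(1-1)*φ (1/2))) := by
      apply Tendsto.mul_const
      exact (tendsto_const_nhds.mul ((tendsto_const_nhds).sub tendsto_id))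
    simpa using this.mono_left nhdsWithin_le_nhds
  exact squeeze_zero' hlb hub hg

/-- Slope to `1` converges to the limit `L` of the derivative. -/
lemma gen_slope (φ : ℝ → ℝ) (hconv : ConvexOn ℝ (Ioc (0:ℝ) 1) φ)
    (hφ1 : φ 1 = 0) (hnn : ∀ t ∈ Ioc (0:ℝ) 1, 0 ≤ φ t)
    (L : ℝ) (hL : L < 0) (hd : Tendsto (deriv φ) (nhdsWithin 1 (Iio (1:ℝ))) (nhds L)) :
    Tendsto (fun t => φ t / (t - 1)) (nhdsWithin 1 (Iio (1:ℝ))) (nhds L) := by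
  rw [Metric.tendsto_nhds]
  intro ε hε
  have hεL : (0:ℝ) < min ε (-L) := lt_min hε (neg_pos.mpr hL)
  have h1 : ∀ᶠ u in nhdsWithin (1:ℝ) (Iio (1:ℝ)), dist (deriv φ u) L < min ε (-L) :=
    Metric.tendsto_nhds.mp hd _ hεL
  obtain ⟨a, ha, hsub⟩ := mem_nhdsLT_iff_exists_Ioo_subset' (show (0:ℝ) < 1 by norm_num) |>.mp h1
  set a' : ℝ := max a 0 with ha'def
  have ha'1 : a' < 1 := max_lt ha (by norm_num)
  have hdiff : ∀ x ∈ Ioo a' 1, DifferentiableAt ℝ φ x := by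
    intro x hx
    by_contra h
    have hx' : x ∈ Ioo a 1 := ⟨lt_of_le_of_lt (le_max_left a 0) hx.1, hx.2⟩
    have hd0 := hsub hx'
    simp only [mem_setOf_eq] at hd0
    rw [deriv_zero_of_not_differentiableAt h] at hd0
    have hd1 : dist (0:ℝ) L < -L := lt_of_lt_of_le hd0 (min_le_right _ _)
    rw [Real.dist_eq, abs_of_pos (by linarith : (0:ℝ) < 0 - L)] at hd1
    linarith
  have hcontq := gen_tendsto_zero φ hconv hφ1 hnn
  filter_upwards [Ioo_mem_nhdsLT_of_mem (show (1:ℝ) ∈ Ioc a' 1 from ⟨ha'1, le_refl _⟩)] with t ht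
  -- MVT on [t, 1]
  have hcont : ContinuousOn φ (Icc t 1) := by
    intro x hx
    rcases lt_or_eq_of_le hx.2 with hx1 | hx1
    · exact ((hdiff x ⟨lt_of_lt_of_le ht.1 hx.1, hx1⟩).continuousAt).continuousWithinAt
    · subst hx1
      have hwa : ContinuousWithinAt φ (Iio 1) 1 := by
        show Tendsto φ (nhdsWithin 1 (Iio (1:ℝ))) (nhds (φ 1))
        rw [hφ1]; exact hcontq
      exact (hwa.insert).mono (fun y hy => Or.symm (lt_or_eq_of_le hy.2))
  have hds : ∀ x ∈ Ioo t 1, HasDerivAt φ (deriv φ x) x := fun x hx =>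
    (hdiff x ⟨lt_trans ht.1 hx.1, hx.2⟩).hasDerivAt
  obtain ⟨ξ, hξ, hξeq⟩ := exists_hasDerivAt_eq_slope φ (deriv φ) ht.2 hcont hds
  have ht1 : t - 1 ≠ 0 := by intro h; exact absurd (by linarith : t = 1) (ne_of_lt ht.2)
  have hslope : φ t / (t - 1) = deriv φ ξ := by
    rw [hξeq, hφ1, zero_sub, neg_div, ← div_neg, neg_sub]
  rw [hslope]
  have hξmem : ξ ∈ Ioo a 1 := ⟨lt_of_le_of_lt (le_max_left a 0) (lt_trans ht.1 hξ.1), hξ.2⟩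
  exact lt_of_lt_of_le (hsub hξmem) (min_le_left _ _)

/-- The inverse `ψ` tends to `1⁻` as `s → 0⁺`. -/
lemma psi_tendsto (φ ψ : ℝ → ℝ) (hanti : StrictAntiOn φ (Ioc (0:ℝ) 1)) (hφ1 : φ 1 = 0)
    (hψmem : ∀ s ∈ Ici (0:ℝ), ψ s ∈ Ioc (0:ℝ) 1)
    (hφψ : ∀ s ∈ Ici (0:ℝ), φ (ψ s) = s) :
    Tendsto ψ (nhdsWithin 0 (Ioi (0:ℝ))) (nhdsWithin 1 (Iio (1:ℝ))) := by
  have hlt1 : ∀ s : ℝ, 0 < s → ψ s < 1 := by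
    intro s hs
    rcases lt_or_eq_of_le (hψmem s (le_of_lt hs)).2 with h | h
    · exact h
    · exfalso
      have := hφψ s (le_of_lt hs)
      rw [h, hφ1] at this
      linarith
  rw [tendsto_nhdsWithin_iff]
  constructor
  · rw [Metric.tendsto_nhds]
    intro ε hε
    set ε' : ℝ := min ε (1/2) with hε'def
    have hε'pos : 0 < ε' := lt_min hε (by norm_num)
    have hε'le : ε' ≤ ε := min_le_left _ _
    have hmem1 : (1 - ε') ∈ Ioc (0:ℝ) 1 := by
      constructor
      · have : ε' ≤ 1/2 := min_le_right _ _
        linarith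
      · linarith
    have hφpos : 0 < φ (1 - ε') := by
      have := hanti hmem1 ⟨by norm_num, le_refl _⟩ (by linarith)
      rw [hφ1] at this
      linarith
    filter_upwards [Ioo_mem_nhdsGT_of_mem (show (0:ℝ) ∈ Ico (0:ℝ) (φ (1-ε')) from ⟨le_refl _, hφpos⟩)]
      with s hs
    have hψgt : 1 - ε' < ψ s := by
      by_contra h
      push_neg at h
      have hψle : φ (1 - ε') ≤ φ (ψ s) := by
        rcases lt_or_eq_of_le h with h' | h'
        · exact le_of_lt (hanti (hψmem s (le_of_lt hs.1)) hmem1 h')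
        · rw [h']
      rw [hφψ s (le_of_lt hs.1)] at hψle
      linarith [hs.2]
    have hψle1 : ψ s ≤ 1 := (hψmem s (le_of_lt hs.1)).2
    rw [Real.dist_eq, abs_lt]
    constructor <;> [linarith; linarith]
  · filter_upwards [self_mem_nhdsWithin] with s hs
    exact hlt1 s hs

/-- Surjectivity of the generator onto `(0, ∞)`. -/
lemma gen_surj (φ : ℝ → ℝ) (hconv : ConvexOn ℝ (Ioc (0:ℝ) 1) φ)
    (hφ1 : φ 1 = 0) (hnn : ∀ t ∈ Ioc (0:ℝ) 1, 0 ≤ φ t)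
    (hstrict : Tendsto φ (nhdsWithin 0 (Ioi (0:ℝ))) atTop) :
    ∀ s : ℝ, 0 < s → ∃ t ∈ Ioo (0:ℝ) 1, φ t = s := by
  intro s hs
  have hcontOn : ContinuousOn φ (Ioo (0:ℝ) 1) := by
    have := hconv.continuousOn_interior
    rwa [interior_Ioc] at this
  have h1 : ∀ᶠ t in nhdsWithin (0:ℝ) (Ioi (0:ℝ)), s < φ t := hstrict.eventually_gt_atTop s
  obtain ⟨t₁, ht₁s, ht₁⟩ :=
    (h1.and (Filter.eventually_mem_set.mpr (Ioo_mem_nhdsGT_of_mem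
      (show (0:ℝ) ∈ Ico (0:ℝ) 1 from ⟨le_refl _, by norm_num⟩)))).exists
  have h2 : ∀ᶠ t in nhdsWithin (1:ℝ) (Iio (1:ℝ)), φ t < s :=
    (gen_tendsto_zero φ hconv hφ1 hnn).eventually (eventually_lt_nhds hs)
  obtain ⟨t₂, ht₂s, ht₂⟩ :=
    (h2.and (Filter.eventually_mem_set.mpr (Ioo_mem_nhdsLT_of_mem
      (show (1:ℝ) ∈ Ioc t₁ 1 from ⟨ht₁.2, le_refl _⟩)))).exists
  have h12 : t₁ ≤ t₂ := le_of_lt ht₂.1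
  have hIccsub : Icc t₁ t₂ ⊆ Ioo (0:ℝ) 1 := fun x hx => ⟨lt_of_lt_of_le ht₁.1 hx.1, lt_of_le_of_lt hx.2 ht₂.2⟩
  have := intermediate_value_Icc' h12 (hcontOn.mono hIccsub)
  obtain ⟨t, htmem, hteq⟩ := this ⟨le_of_lt ht₂s, le_of_lt ht₁s⟩
  exact ⟨t, hIccsub htmem, hteq⟩


/-- Identifiability of strict Archimedean copulas with generators in
`Ω₁ = {φ : φ(0) = ∞, lim_{t↑1} φ'(t) < 0}` when the two margins are equal, continuous,
strictly increasing and known: if the copulas generated by `φ` and `φ'` produce the same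
distribution function `H` of `Z = min(X,Y)` (via `H(z) = 2F(z) - C(F(z),F(z))`), then the
two copulas coincide. -/
theorem stmt5 (φ ψ φ' ψ' : ℝ → ℝ) (C C' : ℝ → ℝ → ℝ) (F H : ℝ → ℝ)
    -- φ is a strict generator in Ω₁
    (hconv : ConvexOn ℝ (Ioc (0:ℝ) 1) φ) (hanti : StrictAntiOn φ (Ioc (0:ℝ) 1))
    (hφ1 : φ 1 = 0) (hnn : ∀ t ∈ Ioc (0:ℝ) 1, 0 ≤ φ t)
    (hstrict : Tendsto φ (nhdsWithin 0 (Ioi (0:ℝ))) atTop)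
    (hderiv : ∃ L < (0:ℝ), Tendsto (deriv φ) (nhdsWithin 1 (Iio (1:ℝ))) (nhds L))
    (hψmem : ∀ s ∈ Ici (0:ℝ), ψ s ∈ Ioc (0:ℝ) 1)
    (hψφ : ∀ t ∈ Ioc (0:ℝ) 1, ψ (φ t) = t) (hφψ : ∀ s ∈ Ici (0:ℝ), φ (ψ s) = s)
    (hC : ∀ u ∈ Ioc (0:ℝ) 1, ∀ v ∈ Ioc (0:ℝ) 1, C u v = ψ (φ u + φ v))
    (hC0x : ∀ v, C 0 v = 0) (hC0y : ∀ u, C u 0 = 0)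
    -- φ' is a strict generator in Ω₁
    (hconv' : ConvexOn ℝ (Ioc (0:ℝ) 1) φ') (hanti' : StrictAntiOn φ' (Ioc (0:ℝ) 1))
    (hφ1' : φ' 1 = 0) (hnn' : ∀ t ∈ Ioc (0:ℝ) 1, 0 ≤ φ' t)
    (hstrict' : Tendsto φ' (nhdsWithin 0 (Ioi (0:ℝ))) atTop)
    (hderiv' : ∃ L < (0:ℝ), Tendsto (deriv φ') (nhdsWithin 1 (Iio (1:ℝ))) (nhds L))
    (hψmem' : ∀ s ∈ Ici (0:ℝ), ψ' s ∈ Ioc (0:ℝ) 1)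
    (hψφ' : ∀ t ∈ Ioc (0:ℝ) 1, ψ' (φ' t) = t) (hφψ' : ∀ s ∈ Ici (0:ℝ), φ' (ψ' s) = s)
    (hC' : ∀ u ∈ Ioc (0:ℝ) 1, ∀ v ∈ Ioc (0:ℝ) 1, C' u v = ψ' (φ' u + φ' v))
    (hC0x' : ∀ v, C' 0 v = 0) (hC0y' : ∀ u, C' u 0 = 0)
    -- F is a known continuous, strictly increasing distribution function
    (hFc : Continuous F) (hFm : StrictMono F)
    (hF0 : Tendsto F atBot (nhds 0)) (hF1 : Tendsto F atTop (nhds 1))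
    -- both copulas give rise to the same distribution function H of Z = min(X,Y)
    (hH : ∀ z, H z = 2 * F z - C (F z) (F z))
    (hH' : ∀ z, H z = 2 * F z - C' (F z) (F z)) :
    ∀ u ∈ Icc (0:ℝ) 1, ∀ v ∈ Icc (0:ℝ) 1, C u v = C' u v := by
  obtain ⟨L, hL, hdL⟩ := hderiv
  obtain ⟨L', hL', hdL'⟩ := hderiv'
  have hLne : L ≠ 0 := ne_of_lt hL
  set c : ℝ := L' / L with hcdef
  -- the ratio g(s)/s tends to c at 0⁺, where g = φ' ∘ ψ
  have hψt := psi_tendsto φ ψ hanti hφ1 hψmem hφψ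
  have hr1 : Tendsto (fun s => φ' (ψ s) / (ψ s - 1)) (nhdsWithin 0 (Ioi (0:ℝ))) (nhds L') :=
    (gen_slope φ' hconv' hφ1' hnn' L' hL' hdL').comp hψt
  have hr2 : Tendsto (fun s => φ (ψ s) / (ψ s - 1)) (nhdsWithin 0 (Ioi (0:ℝ))) (nhds L) :=
    (gen_slope φ hconv hφ1 hnn L hL hdL).comp hψt
  have hratio : Tendsto (fun s => φ' (ψ s) / s) (nhdsWithin 0 (Ioi (0:ℝ))) (nhds c) := by
    apply (hr1.div hr2 hLne).congr'
    filter_upwards [self_mem_nhdsWithin] with s hs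
    have hs0 : (0:ℝ) < s := hs
    have hφψs : φ (ψ s) = s := hφψ s (le_of_lt hs0)
    have hψne : ψ s - 1 ≠ 0 := by
      intro h
      have : ψ s = 1 := by linarith
      rw [this, hφ1] at hφψs
      linarith
    show φ' (ψ s) / (ψ s - 1) / (φ (ψ s) / (ψ s - 1)) = φ' (ψ s) / s
    rw [hφψs, div_div_div_cancel_right₀ hψne]
  -- diagonal sections coincide on (0,1)
  have hdiag : ∀ u ∈ Ioo (0:ℝ) 1, ψ (2 * φ u) = ψ' (2 * φ' u) := by
    intro u hu
    obtain ⟨z, hz⟩ : ∃ z, F z = u := by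
      obtain ⟨a, haF⟩ := (hF0.eventually (eventually_lt_nhds hu.1)).exists
      obtain ⟨b, hbF⟩ := (hF1.eventually (eventually_gt_nhds hu.2)).exists
      have := intermediate_value_univ a b hFc
      exact this ⟨le_of_lt haF, le_of_lt hbF⟩
    have huIoc : u ∈ Ioc (0:ℝ) 1 := ⟨hu.1, le_of_lt hu.2⟩
    have hCC' : C u u = C' u u := by
      have h1 := hH z
      have h2 := hH' z
      rw [hz] at h1 h2
      linarith
    rw [hC u huIoc u huIoc, hC' u huIoc u huIoc] at hCC'
    rw [two_mul, two_mul]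
    exact hCC'
  -- functional equation g(2s) = 2 g(s)
  have hfe : ∀ s : ℝ, 0 < s → φ' (ψ (2 * s)) = 2 * φ' (ψ s) := by
    intro s hs
    obtain ⟨t, ht, hts⟩ := gen_surj φ hconv hφ1 hnn hstrict s hs
    have htIoc : t ∈ Ioc (0:ℝ) 1 := ⟨ht.1, le_of_lt ht.2⟩
    rw [← hts, hψφ t htIoc, hdiag t ht, hφψ' (2 * φ' t)
      (mem_Ici.mpr (by have := hnn' t htIoc; linarith))]
  -- linearity of g
  have hglin : ∀ s : ℝ, 0 ≤ s → φ' (ψ s) = c * s := by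
    intro s hs
    rcases eq_or_lt_of_le hs with h | h
    · -- s = 0 : ψ 0 = 1
      have hψ0 : ψ 0 = 1 := by
        apply hanti.injOn (hψmem 0 (mem_Ici.mpr le_rfl)) (show (1:ℝ) ∈ Ioc (0:ℝ) 1 from ⟨by norm_num, le_refl _⟩)
        rw [hφψ 0 (mem_Ici.mpr le_rfl), hφ1]
      rw [← h, hψ0, hφ1', mul_zero]
    · -- s > 0 : dyadic argument
      have hseq0 : Tendsto (fun n : ℕ => s * (1/2)^n) atTop (nhdsWithin 0 (Ioi (0:ℝ))) := by
        rw [tendsto_nhdsWithin_iff]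
        constructor
        · have := (tendsto_pow_atTop_nhds_zero_of_lt_one
            (by norm_num : (0:ℝ) ≤ 1/2) (by norm_num : (1/2:ℝ) < 1)).const_mul s
          simpa using this
        · filter_upwards with n
          have : (0:ℝ) < (1/2)^n := by positivity
          exact mul_pos h this
      have hconstseq : ∀ n : ℕ, φ' (ψ (s * (1/2)^n)) / (s * (1/2)^n) = φ' (ψ s) / s := by
        intro n
        induction n with
        | zero => simp
        | succ n ih =>
          set q : ℝ := s * (1/2)^n with hq
          have hqpos : 0 < q := mul_pos h (by positivity)
          have hhalf : s * (1/2)^(n+1) = q / 2 := by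
            rw [hq, pow_succ]; ring
          have hfeq := hfe (q/2) (by linarith)
          have h2q : 2 * (q/2) = q := by ring
          rw [h2q] at hfeq
          rw [hhalf, ← ih]
          rw [hfeq]
          field_simp
      have hlim : Tendsto (fun _ : ℕ => φ' (ψ s) / s) atTop (nhds c) := by
        have := hratio.comp hseq0
        exact this.congr (fun n => hconstseq n)
      have : φ' (ψ s) / s = c := tendsto_nhds_unique tendsto_const_nhds hlim
      field_simp at this
      linarith [this]
  -- φ' = c • φ on Ioc 0 1
  have hprop : ∀ t ∈ Ioc (0:ℝ) 1, φ' t = c * φ t := by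
    intro t ht
    have := hglin (φ t) (hnn t ht)
    rwa [hψφ t ht] at this
  -- ψ' (c * s) = ψ s for s ≥ 0
  have hpsi : ∀ s : ℝ, 0 ≤ s → ψ' (c * s) = ψ s := by
    intro s hs
    have h1 := hψφ' (ψ s) (hψmem s hs)
    rwa [hglin s hs] at h1
  -- conclusion
  intro u hu v hv
  rcases eq_or_lt_of_le hu.1 with h | h
  · rw [← h, hC0x, hC0x']
  rcases eq_or_lt_of_le hv.1 with h' | h'
  · rw [← h', hC0y, hC0y']
  have huIoc : u ∈ Ioc (0:ℝ) 1 := ⟨h, hu.2⟩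
  have hvIoc : v ∈ Ioc (0:ℝ) 1 := ⟨h', hv.2⟩
  rw [hC u huIoc v hvIoc, hC' u huIoc v hvIoc]
  rw [hprop u huIoc, hprop v hvIoc, ← mul_add, hpsi (φ u + φ v)
    (add_nonneg (hnn u huIoc) (hnn v hvIoc))]
end

section
/- Let $\varphi_\theta\in\Omega$ be a generator with derivative $\varphi_\theta'$, $H$ a continuous strictly increasing distribution function on $(0,\infty)$ decomposed as $H(s)=H(s,0)+H(s,1)$, and define for $z\in(0,1)$: $\zeta_x(z)=\varphi_\theta^{[-1]}\big(-\int_{H^{-1}(z)}^\infty \varphi_\theta'(H(s))\,dH(s,1)\big)$ and $\zeta_y(z)=\varphi_\theta^{[-1]}\big(-\int_{H^{-1}(z)}^\infty \varphi_\theta'(H(s))\,dH(s,0)\big)$. Then $\varphi_\theta(\zeta_x(z))+\varphi_\theta(\zeta_y(z))=\varphi_\theta(z)$, i.e. the Archimedean copula generated by $\varphi_\theta$ satisfies $C_\theta(\zeta_x(z),\zeta_y(z))=z$, provided both integrals are at most $\varphi_\theta(0)$. -/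
open Set MeasureTheory Filter

/-- For a generator `φ_θ` with derivative `φ_θ'`, a continuous strictly increasing
distribution function `H` on `(0,∞)` decomposed as `H = H(·,0) + H(·,1)` (with associated
sub-distribution measures `ν₀, ν₁`), the point
`(ζ_x(z), ζ_y(z)) = (φ^{[-1]}(-∫_{H⁻¹(z)}^∞ φ'(H(s)) dH(s,1)), φ^{[-1]}(-∫_{H⁻¹(z)}^∞ φ'(H(s)) dH(s,0)))`
lies on the level curve of level `z` of the Archimedean copula generated by `φ_θ`:
`φ(ζ_x(z)) + φ(ζ_y(z)) = φ(z)` and hence `C_θ(ζ_x(z), ζ_y(z)) = z`, provided both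
integrals are at most `φ(0)`. -/
theorem stmt13 (φ φd ψp : ℝ → ℝ) (H H0 H1 : ℝ → ℝ) (ν0 ν1 : Measure ℝ)
    [IsFiniteMeasure ν0] [IsFiniteMeasure ν1]
    (hφc : ContinuousOn φ (Icc (0:ℝ) 1))
    (hconv : ConvexOn ℝ (Icc (0:ℝ) 1) φ)
    (hanti : StrictAntiOn φ (Icc (0:ℝ) 1))
    (hφ1 : φ 1 = 0) (hnn : ∀ t ∈ Icc (0:ℝ) 1, 0 ≤ φ t)
    (hderiv : ∀ t ∈ Ioo (0:ℝ) 1, HasDerivAt φ (φd t) t)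
    -- pseudo-inverse of φ
    (hψp : ∀ s ∈ Icc (0:ℝ) (φ 0), φ (ψp s) = s ∧ ψp s ∈ Icc (0:ℝ) 1)
    (hψp0 : ∀ s : ℝ, φ 0 < s → ψp s = 0)
    -- sub-distribution functions and their measures
    (hH0 : ∀ s, H0 s = (ν0 (Iic s)).toReal)
    (hH1 : ∀ s, H1 s = (ν1 (Iic s)).toReal)
    (hsum : ∀ s, H0 s + H1 s = H s)
    (hHc : Continuous H) (hHm : StrictMonoOn H (Ici (0:ℝ)))
    (hHzero : H 0 = 0) (hHone : Tendsto H atTop (nhds 1))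
    -- z and a = H⁻¹(z)
    (z a : ℝ) (hz : z ∈ Ioo (0:ℝ) 1) (ha : 0 < a) (hHa : H a = z)
    (hint1 : IntegrableOn (fun s => φd (H s)) (Ioi a) ν1)
    (hint0 : IntegrableOn (fun s => φd (H s)) (Ioi a) ν0)
    (hle1 : -∫ s in Ioi a, φd (H s) ∂ν1 ≤ φ 0)
    (hle0 : -∫ s in Ioi a, φd (H s) ∂ν0 ≤ φ 0) :
    φ (ψp (-∫ s in Ioi a, φd (H s) ∂ν1)) + φ (ψp (-∫ s in Ioi a, φd (H s) ∂ν0)) = φ z ∧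
    ψp (φ (ψp (-∫ s in Ioi a, φd (H s) ∂ν1)) + φ (ψp (-∫ s in Ioi a, φd (H s) ∂ν0)))
      = z := by
  obtain ⟨hz0, hz1⟩ := hz
  obtain ⟨ν, hν⟩ : ∃ ν : Measure ℝ, ν = ν0 + ν1 := ⟨_, rfl⟩
  have hνfin : IsFiniteMeasure ν := by rw [hν]; infer_instance
  -- CDF facts
  have htoReal : ∀ s, H s = (ν (Iic s)).toReal := by
    intro s
    rw [← hsum s, hH0, hH1, hν]
    simp [Measure.add_apply, ENNReal.toReal_add (measure_ne_top ν0 _) (measure_ne_top ν1 _)]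
  have hνIic : ∀ s, ν (Iic s) = ENNReal.ofReal (H s) := by
    intro s
    rw [htoReal s, ENNReal.ofReal_toReal (measure_ne_top ν _)]
  have hνuniv : ν univ = 1 := by
    have h1 : Tendsto (fun s => ν (Iic s)) atTop (nhds (ν univ)) :=
      tendsto_measure_Iic_atTop ν
    have h2 : Tendsto (fun s => ν (Iic s)) atTop (nhds 1) := by
      simp only [hνIic]
      have := (ENNReal.continuous_ofReal.tendsto 1).comp hHone
      simpa [Function.comp_def] using this
    exact tendsto_nhds_unique h1 h2
  have hHnn : ∀ s, 0 ≤ H s := fun s => (htoReal s) ▸ ENNReal.toReal_nonneg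
  have hHmono : Monotone H := by
    intro s t hst
    rw [htoReal s, htoReal t]
    exact ENNReal.toReal_mono (measure_ne_top ν _) (measure_mono (Iic_subset_Iic.2 hst))
  have hHle1 : ∀ s, H s ≤ 1 := by
    intro s
    rw [htoReal s]
    calc (ν (Iic s)).toReal ≤ (ν univ).toReal :=
          ENNReal.toReal_mono (measure_ne_top ν _) (measure_mono (subset_univ _))
      _ = 1 := by rw [hνuniv]; simp
  have hHlt1 : ∀ s, H s < 1 := by
    intro s
    have h1 : H s ≤ H (max s 0) := hHmono (le_max_left _ _)
    have h2 : H (max s 0) < H (max s 0 + 1) :=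
      hHm (mem_Ici.2 (le_max_right _ _))
        (mem_Ici.2 (by linarith [le_max_right s 0])) (by linarith)
    have h3 := hHle1 (max s 0 + 1)
    linarith
  -- φd is nonpositive on (0,1)
  have hφd_nonpos : ∀ t ∈ Ioo (0:ℝ) 1, φd t ≤ 0 := by
    intro t ht
    have hslope := hasDerivAt_iff_tendsto_slope.1 (hderiv t ht)
    have hmono : nhdsWithin t (Ioi t) ≤ nhdsWithin t {t}ᶜ :=
      nhdsWithin_mono t (fun x hx => ne_of_gt hx)
    have hne : (nhdsWithin t (Ioi t)).NeBot := nhdsGT_neBot t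
    refine le_of_tendsto (hslope.mono_left hmono) ?_
    filter_upwards [Ioo_mem_nhdsGT_of_mem ⟨le_refl t, ht.2⟩] with x hx
    rw [slope_def_field]
    have hlt : φ x < φ t := hanti ⟨ht.1.le, ht.2.le⟩ ⟨(ht.1.trans hx.1).le, hx.2.le⟩ hx.1
    exact div_nonpos_iff.2 (Or.inr ⟨by linarith, by linarith [hx.1]⟩)
  obtain ⟨μ, hμ⟩ : ∃ μ : Measure ℝ, μ = ν.restrict (Ioi a) := ⟨_, rfl⟩
  have hHmeas : Measurable H := hHc.measurable
  -- the pushforward identity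
  have hfin : IsFiniteMeasure (Measure.map H μ) := by
    constructor
    rw [Measure.map_apply hHmeas MeasurableSet.univ, hμ]
    exact (measure_mono (subset_univ _)).trans_lt
      (by rw [Measure.restrict_apply_univ]; exact
        (measure_mono (subset_univ _)).trans_lt (by rw [hνuniv]; simp))
  have key : Measure.map H μ = volume.restrict (Ioc z 1) := by
    refine Measure.ext_of_Iic _ _ (fun b => ?_)
    rw [Measure.map_apply hHmeas measurableSet_Iic, hμ,
      Measure.restrict_apply (hHmeas measurableSet_Iic),
      Measure.restrict_apply measurableSet_Iic]
    rcases lt_or_ge b z with hb | hb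
    · have h1 : H ⁻¹' Iic b ∩ Ioi a = ∅ := by
        ext s
        simp only [mem_inter_iff, mem_preimage, mem_Iic, mem_Ioi, mem_empty_iff_false,
          iff_false, not_and]
        intro hsb hs
        have : H a < H s := hHm (mem_Ici.2 ha.le) (mem_Ici.2 (ha.trans hs).le) hs
        rw [hHa] at this; linarith
      have h2 : Iic b ∩ Ioc z 1 = ∅ := by
        ext x; simp only [mem_inter_iff, mem_Iic, mem_Ioc, mem_empty_iff_false, iff_false,
          not_and]
        intro hxb hx h1; linarith
      rw [h1, h2]; simp
    · rcases le_or_gt 1 b with hb1 | hb1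
      · have h1 : H ⁻¹' Iic b = univ := by
          ext s; simp only [mem_preimage, mem_Iic, mem_univ, iff_true]
          exact (hHle1 s).trans hb1
        have h2 : Iic b ∩ Ioc z 1 = Ioc z 1 := by
          rw [inter_eq_right]
          intro x hx; exact hx.2.trans hb1
        have h3 : ν (Ioi a) = ENNReal.ofReal (1 - z) := by
          rw [← compl_Iic, measure_compl measurableSet_Iic (measure_ne_top ν _), hνuniv,
            hνIic, hHa, (show (1 : ENNReal) = ENNReal.ofReal 1 by simp),
            ← ENNReal.ofReal_sub _ hz0.le]
        rw [h1, univ_inter, h2, h3, Real.volume_Ioc]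
      · -- z ≤ b < 1 : find c with H c = b
        obtain ⟨M, hM⟩ : ∃ M, a ≤ M ∧ b ≤ H M := by
          have h1 : ∀ᶠ s in atTop, b < H s := hHone.eventually (eventually_gt_nhds hb1)
          obtain ⟨M, hM1, hM2⟩ := (h1.and (eventually_ge_atTop a)).exists
          exact ⟨M, hM2, hM1.le⟩
        obtain ⟨c, hcmem, hc⟩ :=
          intermediate_value_Icc hM.1 (hHc.continuousOn (s := Icc a M))
            (by rw [hHa]; exact ⟨hb, hM.2⟩)
        have h1 : H ⁻¹' Iic b ∩ Ioi a = Ioc a c := by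
          ext s
          simp only [mem_inter_iff, mem_preimage, mem_Iic, mem_Ioi, mem_Ioc]
          constructor
          · rintro ⟨hsb, hs⟩
            refine ⟨hs, ?_⟩
            by_contra hcs
            push_neg at hcs
            have : H c < H s :=
              hHm (mem_Ici.2 (ha.le.trans hcmem.1)) (mem_Ici.2 (ha.trans hs).le) hcs
            rw [hc] at this; linarith
          · rintro ⟨hs, hsc⟩
            refine ⟨?_, hs⟩
            have : H s ≤ H c := hHmono hsc
            rw [hc] at this; linarith
        have h2 : Iic b ∩ Ioc z 1 = Ioc z b := by
          ext x; simp only [mem_inter_iff, mem_Iic, mem_Ioc]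
          constructor
          · rintro ⟨hxb, hx1, hx2⟩; exact ⟨hx1, hxb⟩
          · rintro ⟨hx1, hx2⟩; exact ⟨hx2, hx1, hx2.trans hb1.le⟩
        have h3 : ν (Ioc a c) = ENNReal.ofReal (b - z) := by
          rw [← Iic_sdiff_Iic,
            measure_diff (Iic_subset_Iic.2 hcmem.1) nullMeasurableSet_Iic
              (measure_ne_top ν _),
            hνIic, hνIic, hHa, hc, ← ENNReal.ofReal_sub _ hz0.le]
        rw [h1, h2, h3, Real.volume_Ioc]
  -- integrability over μ
  have hrestr : μ = ν0.restrict (Ioi a) + ν1.restrict (Ioi a) := by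
    rw [hμ, hν, Measure.restrict_add]
  have hInt : Integrable (fun s => φd (H s)) μ := by
    rw [hrestr]
    exact Integrable.add_measure hint0 hint1
  -- a.e. strong measurability of φd w.r.t. the mapped measure
  have hsm : AEStronglyMeasurable φd (Measure.map H μ) := by
    rw [key]
    have hres : volume.restrict (Ioc z 1) = volume.restrict (Ioo z 1) :=
      (restrict_Ioo_eq_restrict_Ioc (μ := volume) (a := z) (b := 1)).symm
    rw [hres]
    have hae : φd =ᵐ[volume.restrict (Ioo z 1)] deriv φ := by
      filter_upwards [ae_restrict_mem measurableSet_Ioo] with x hx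
      exact ((hderiv x ⟨hz0.trans hx.1, hx.2⟩).deriv).symm
    exact ((measurable_deriv φ).aestronglyMeasurable).congr hae.symm
  have hIntMap : Integrable φd (Measure.map H μ) :=
    (integrable_map_measure hsm hHmeas.aemeasurable).2 hInt
  -- the key computation
  have hkey : ∫ s, φd (H s) ∂μ = -φ z := by
    have h1 : ∫ s, φd (H s) ∂μ = ∫ u, φd u ∂(Measure.map H μ) :=
      (integral_map hHmeas.aemeasurable hsm).symm
    have h2 : ∫ u, φd u ∂(Measure.map H μ) = ∫ u in Ioc z 1, φd u := by rw [key]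
    have h3 : ∫ u in Ioc z 1, φd u = ∫ u in z..1, φd u :=
      (intervalIntegral.integral_of_le hz1.le).symm
    have hii : IntervalIntegrable φd volume z 1 := by
      rw [intervalIntegrable_iff_integrableOn_Ioc_of_le hz1.le]
      have := hIntMap
      rwa [key] at this
    have h4 : ∫ u in z..1, φd u = φ 1 - φ z := by
      apply intervalIntegral.integral_eq_sub_of_hasDeriv_right_of_le hz1.le
      · exact hφc.mono (Icc_subset_Icc hz0.le le_rfl)
      · intro x hx
        exact (hderiv x ⟨hz0.trans hx.1, hx.2⟩).hasDerivWithinAt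
      · exact hii
    rw [h1, h2, h3, h4, hφ1]; ring
  have hsplit : (∫ s in Ioi a, φd (H s) ∂ν0) + (∫ s in Ioi a, φd (H s) ∂ν1) = -φ z := by
    rw [← hkey, hrestr]
    exact (integral_add_measure hint0 hint1).symm
  -- nonnegativity of the two integrals' negatives
  have hIoo : ∀ s ∈ Ioi a, H s ∈ Ioo (0:ℝ) 1 := by
    intro s hs
    have h1 : H a < H s := hHm (mem_Ici.2 ha.le) (mem_Ici.2 (ha.trans hs).le) hs
    rw [hHa] at h1
    exact ⟨hz0.trans h1, hHlt1 s⟩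
  have hnp : ∀ (νi : Measure ℝ), (∫ s in Ioi a, φd (H s) ∂νi) ≤ 0 := by
    intro νi
    apply setIntegral_nonpos measurableSet_Ioi
    intro s hs
    exact hφd_nonpos _ (hIoo s hs)
  have hI1 := hψp _ ⟨neg_nonneg.2 (hnp ν1), hle1⟩
  have hI0 := hψp _ ⟨neg_nonneg.2 (hnp ν0), hle0⟩
  have hmain : φ (ψp (-∫ s in Ioi a, φd (H s) ∂ν1)) +
      φ (ψp (-∫ s in Ioi a, φd (H s) ∂ν0)) = φ z := by
    rw [hI1.1, hI0.1]; linarith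
  refine ⟨hmain, ?_⟩
  rw [hmain]
  have hφz : φ z ∈ Icc 0 (φ 0) := by
    refine ⟨hnn z ⟨hz0.le, hz1.le⟩, ?_⟩
    exact (hanti ⟨le_refl 0, zero_le_one⟩ ⟨hz0.le, hz1.le⟩ hz0).le
  obtain ⟨heq, hmem⟩ := hψp _ hφz
  exact hanti.injOn hmem ⟨hz0.le, hz1.le⟩ heq
end

section
/- Two copulas $C, C'$ with densities, combined with the same known differentiable margins $F_X, F_Y$, induce the same joint distribution of $(Z,\Delta)=(\min(X,Y),\mathbf{1}_{X\le Y})$ if and only if for all $z\in\mathbb{R}$ both $\frac{\partial}{\partial x}C(F_X(x),F_Y(z))|_{x=z} = \frac{\partial}{\partial x}C'(F_X(x),F_Y(z))|_{x=z}$ and $\frac{\partial}{\partial y}C(F_X(z),F_Y(y))|_{y=z} = \frac{\partial}{\partial y}C'(F_X(z),F_Y(y))|_{y=z}$. -/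
open Set MeasureTheory intervalIntegral Filter Function Topology
open scoped Interval

namespace Stmt17Aux




lemma double_swap {f : ℝ → ℝ → ℝ} (hf : Continuous (Function.uncurry f)) (a b : ℝ) :
    ∫ x in (0:ℝ)..a, ∫ y in (0:ℝ)..b, f x y = ∫ y in (0:ℝ)..b, ∫ x in (0:ℝ)..a, f x y := by
  have hint : Integrable (Function.uncurry f)
      ((volume.restrict (Ι (0:ℝ) a)).prod (volume.restrict (Ι (0:ℝ) b))) := by
    rw [Measure.prod_restrict, ← Measure.volume_eq_prod]
    refine IntegrableOn.mono_set ?_ (Set.prod_mono uIoc_subset_uIcc uIoc_subset_uIcc)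
    exact hf.continuousOn.integrableOn_compact (isCompact_uIcc.prod isCompact_uIcc)
  have key : ∫ x in Ι (0:ℝ) a, ∫ y in Ι (0:ℝ) b, f x y
      = ∫ y in Ι (0:ℝ) b, ∫ x in Ι (0:ℝ) a, f x y := integral_integral_swap hint
  simp only [intervalIntegral_eq_integral_uIoc, MeasureTheory.integral_smul]
  rw [key, smul_comm]

lemma contInner {c : ℝ → ℝ → ℝ} (hc : Continuous (Function.uncurry c)) (b : ℝ) :
    Continuous fun u => ∫ v in (0:ℝ)..b, c u v :=
  intervalIntegral.continuous_parametric_intervalIntegral_of_continuous' hc 0 b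

lemma hasDerivAt_fst {c C : ℝ → ℝ → ℝ} (hc : Continuous (Function.uncurry c))
    (hC : ∀ a b : ℝ, C a b = ∫ u in (0:ℝ)..a, ∫ v in (0:ℝ)..b, c u v) (a b : ℝ) :
    HasDerivAt (fun t => C t b) (∫ v in (0:ℝ)..b, c a v) a := by
  have hk : Continuous fun u => ∫ v in (0:ℝ)..b, c u v := contInner hc b
  have h : HasDerivAt (fun t => ∫ u in (0:ℝ)..t, ∫ v in (0:ℝ)..b, c u v)
      (∫ v in (0:ℝ)..b, c a v) a :=
    intervalIntegral.integral_hasDerivAt_right (hk.intervalIntegrable 0 a)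
      (hk.stronglyMeasurableAtFilter volume (nhds a)) hk.continuousAt
  exact h.congr_of_eventuallyEq (Filter.Eventually.of_forall fun t => hC t b)





lemma keyDeriv {A F G f : ℝ → ℝ} {c C : ℝ → ℝ → ℝ}
    (hc : Continuous (Function.uncurry c))
    (hC : ∀ a b : ℝ, C a b = ∫ u in (0:ℝ)..a, ∫ v in (0:ℝ)..b, c u v)
    (hF : ∀ z, HasDerivAt F (f z) z) (hG : Continuous G)
    (hlow : ∀ a b : ℝ, a ≤ b →
      (F b - F a) - (C (F b) (G b) - C (F a) (G b)) ≤ A b - A a)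
    (hup : ∀ a b : ℝ, a ≤ b →
      A b - A a ≤ (F b - F a) - (C (F b) (G a) - C (F a) (G a)))
    (z : ℝ) :
    HasDerivAt A (f z - (∫ v in (0:ℝ)..(G z), c (F z) v) * f z) z := by
  have hφ : HasDerivAt (fun w => F w - C (F w) (G z))
      (f z - (∫ v in (0:ℝ)..(G z), c (F z) v) * f z) z := by
    have h1 : HasDerivAt (fun w => C (F w) (G z))
        ((∫ v in (0:ℝ)..(G z), c (F z) v) * f z) z :=
      (hasDerivAt_fst hc hC (F z) (G z)).comp z (hF z)
    exact (hF z).sub h1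
  have hs1 : Tendsto (slope (fun w => F w - C (F w) (G z)) z) (𝓝[≠] z)
      (𝓝 (f z - (∫ v in (0:ℝ)..(G z), c (F z) v) * f z)) :=
    hasDerivAt_iff_tendsto_slope.1 hφ
  set L := f z - (∫ v in (0:ℝ)..(G z), c (F z) v) * f z with hLdef
  set R : ℝ → ℝ := fun w =>
    (C (F w) (G w) - C (F z) (G w)) - (C (F w) (G z) - C (F z) (G z)) with hRdef
  have hFc : Continuous F := continuous_iff_continuousAt.2 fun x => (hF x).continuousAt
  obtain ⟨M1, hM1⟩ := (isCompact_Icc (a := z - 1) (b := z + 1)).exists_bound_of_continuousOn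
    hFc.continuousOn
  obtain ⟨M2, hM2⟩ := (isCompact_Icc (a := z - 1) (b := z + 1)).exists_bound_of_continuousOn
    hG.continuousOn
  obtain ⟨M, hM⟩ := ((isCompact_Icc (a := -M1) (b := M1)).prod
    (isCompact_Icc (a := -M2) (b := M2))).exists_bound_of_continuousOn hc.continuousOn
  have hzmem : z ∈ Icc (z - 1) (z + 1) := by constructor <;> linarith
  have habs : ∀ w ∈ Icc (z - 1) (z + 1), |R w| ≤ M * |G w - G z| * |F w - F z| := by
    intro w hw
    have hFzb := abs_le.mp (by simpa using hM1 z hzmem)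
    have hFwb := abs_le.mp (by simpa using hM1 w hw)
    have hGzb := abs_le.mp (by simpa using hM2 z hzmem)
    have hGwb := abs_le.mp (by simpa using hM2 w hw)
    have hki : ∀ s a' b' : ℝ,
        IntervalIntegrable (fun u => ∫ v in (0:ℝ)..s, c u v) volume a' b' :=
      fun s a' b' => (contInner hc s).intervalIntegrable a' b'
    have e1 : ∀ s : ℝ, C (F w) s - C (F z) s
        = ∫ u in (F z)..(F w), ∫ v in (0:ℝ)..s, c u v := by
      intro s
      rw [hC, hC]
      exact integral_interval_sub_left (hki s 0 (F w)) (hki s 0 (F z))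
    have e2 : R w = ∫ u in (F z)..(F w),
        ((∫ v in (0:ℝ)..(G w), c u v) - ∫ v in (0:ℝ)..(G z), c u v) := by
      rw [hRdef]
      simp only
      rw [e1, e1, ← intervalIntegral.integral_sub (hki (G w) (F z) (F w)) (hki (G z) (F z) (F w))]
    have step : ∀ u ∈ Ι (F z) (F w),
        ‖(∫ v in (0:ℝ)..(G w), c u v) - ∫ v in (0:ℝ)..(G z), c u v‖ ≤ M * |G w - G z| := by
      intro u hu
      have hub : -M1 ≤ u ∧ u ≤ M1 := by
        rcases hu with ⟨h1, h2⟩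
        constructor
        · exact le_of_lt (lt_of_le_of_lt (le_min hFzb.1 hFwb.1) h1)
        · exact le_trans h2 (max_le hFzb.2 hFwb.2)
      have hdiff : (∫ v in (0:ℝ)..(G w), c u v) - ∫ v in (0:ℝ)..(G z), c u v
          = ∫ v in (G z)..(G w), c u v :=
        integral_interval_sub_left ((hc.uncurry_left u).intervalIntegrable 0 (G w))
          ((hc.uncurry_left u).intervalIntegrable 0 (G z))
      rw [hdiff]
      have hbd : ∀ v ∈ Ι (G z) (G w), ‖c u v‖ ≤ M := by
        intro v hv
        have hvb : -M2 ≤ v ∧ v ≤ M2 := by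
          rcases hv with ⟨h1, h2⟩
          exact ⟨le_of_lt (lt_of_le_of_lt (le_min hGzb.1 hGwb.1) h1),
            le_trans h2 (max_le hGzb.2 hGwb.2)⟩
        exact hM (u, v) ⟨⟨hub.1, hub.2⟩, ⟨hvb.1, hvb.2⟩⟩
      exact intervalIntegral.norm_integral_le_of_norm_le_const hbd
    have := intervalIntegral.norm_integral_le_of_norm_le_const step
    rw [← e2] at this
    calc |R w| = ‖R w‖ := (Real.norm_eq_abs _).symm
      _ ≤ M * |G w - G z| * |F w - F z| := this
  have hR : Tendsto (fun w => R w / (w - z)) (𝓝[≠] z) (𝓝 0) := by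
    have hF0 : Tendsto (fun w => |slope F z w|) (𝓝[≠] z) (𝓝 |f z|) :=
      (hasDerivAt_iff_tendsto_slope.1 (hF z)).abs
    have hG0 : Tendsto (fun w => M * |G w - G z|) (𝓝[≠] z) (𝓝 0) := by
      have h1 : Tendsto (fun w => G w - G z) (𝓝 z) (𝓝 (G z - G z)) :=
        (hG.tendsto z).sub tendsto_const_nhds
      have h2 := (h1.abs.const_mul M).mono_left (nhdsWithin_le_nhds (s := {z}ᶜ))
      simpa using h2
    have hprod : Tendsto (fun w => M * |G w - G z| * |slope F z w|) (𝓝[≠] z) (𝓝 0) := by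
      simpa using hG0.mul hF0
    refine squeeze_zero_norm' ?_ hprod
    have hev1 : ∀ᶠ w in 𝓝[≠] z, w ∈ Icc (z - 1) (z + 1) :=
      eventually_nhdsWithin_of_eventually_nhds (Icc_mem_nhds (by linarith) (by linarith))
    have hev2 : ∀ᶠ w in 𝓝[≠] z, w ≠ z := by
      filter_upwards [self_mem_nhdsWithin] with w hw using hw
    filter_upwards [hev1, hev2] with w hw hne
    have h1 := habs w hw
    have hwz : (0:ℝ) < |w - z| := abs_pos.2 (sub_ne_zero.2 hne)
    rw [Real.norm_eq_abs, abs_div, div_le_iff₀ hwz]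
    have hsl : |slope F z w| * |w - z| = |F w - F z| := by
      rw [slope_def_field, abs_div, div_mul_cancel₀ _ (ne_of_gt hwz)]
    calc |R w| ≤ M * |G w - G z| * |F w - F z| := h1
      _ = M * |G w - G z| * |slope F z w| * |w - z| := by
          rw [mul_assoc (M * |G w - G z|), hsl]
  have hs2 : Tendsto (fun w => slope (fun w => F w - C (F w) (G z)) z w - R w / (w - z))
      (𝓝[≠] z) (𝓝 L) := by simpa using hs1.sub hR
  rw [hasDerivAt_iff_tendsto_slope]
  rw [show (𝓝[≠] z) = 𝓝[<] z ⊔ 𝓝[>] z from (nhdsLT_sup_nhdsGT z).symm,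
    tendsto_sup]
  have hmlt : 𝓝[<] z ≤ 𝓝[≠] z := nhdsWithin_mono z fun w hw => ne_of_lt hw
  have hmgt : 𝓝[>] z ≤ 𝓝[≠] z := nhdsWithin_mono z fun w hw => ne_of_gt hw
  constructor
  · refine tendsto_of_tendsto_of_tendsto_of_le_of_le' (hs1.mono_left hmlt)
      (hs2.mono_left hmlt) ?_ ?_
    · filter_upwards [self_mem_nhdsWithin] with w (hw : w < z)
      have hab := hlow w z (le_of_lt hw)
      have hwz : w - z < 0 := sub_neg.2 hw
      rw [slope_def_field, slope_def_field, div_le_div_right_of_neg hwz]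
      linarith
    · filter_upwards [self_mem_nhdsWithin] with w (hw : w < z)
      have hab := hup w z (le_of_lt hw)
      have hwz : w - z < 0 := sub_neg.2 hw
      rw [slope_def_field, slope_def_field, div_sub_div_same, div_le_div_right_of_neg hwz]
      simp only [hRdef]
      linarith
  · refine tendsto_of_tendsto_of_tendsto_of_le_of_le' (hs2.mono_left hmgt)
      (hs1.mono_left hmgt) ?_ ?_
    · filter_upwards [self_mem_nhdsWithin] with w (hw : z < w)
      have hab := hlow z w (le_of_lt hw)
      have hwz : (0:ℝ) < w - z := sub_pos.2 hw
      rw [slope_def_field, slope_def_field, div_sub_div_same, div_le_div_iff_of_pos_right hwz]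
      simp only [hRdef]
      linarith
    · filter_upwards [self_mem_nhdsWithin] with w (hw : z < w)
      have hab := hup z w (le_of_lt hw)
      have hwz : (0:ℝ) < w - z := sub_pos.2 hw
      rw [slope_def_field, slope_def_field, div_le_div_iff_of_pos_right hwz]
      linarith





lemma toReal_split {Ω : Type*} [MeasurableSpace Ω] (μ : Measure Ω) [IsFiniteMeasure μ]
    {s t : Set Ω} (hs : MeasurableSet s) (hsub : s ⊆ t) :
    (μ t).toReal = (μ s).toReal + (μ (t \ s)).toReal := by
  have h := measure_add_diff (μ := μ) hs.nullMeasurableSet t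
  rw [Set.union_eq_self_of_subset_left hsub] at h
  rw [← h, ENNReal.toReal_add (measure_ne_top μ _) (measure_ne_top μ _)]

lemma toReal_inter_diff {Ω : Type*} [MeasurableSpace Ω] (μ : Measure Ω) [IsFiniteMeasure μ]
    (s : Set Ω) {t : Set Ω} (ht : MeasurableSet t) :
    (μ s).toReal = (μ (s ∩ t)).toReal + (μ (s \ t)).toReal := by
  rw [← ENNReal.toReal_add (measure_ne_top μ _) (measure_ne_top μ _),
    measure_inter_add_diff s ht]

lemma boundsX {Ω : Type*} [MeasurableSpace Ω] (μ : Measure Ω) [IsProbabilityMeasure μ]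
    {X Y : Ω → ℝ} (hX : Measurable X) (hY : Measurable Y)
    {FX FY : ℝ → ℝ} {C : ℝ → ℝ → ℝ}
    (hFX : ∀ x, FX x = (μ {ω | X ω ≤ x}).toReal)
    (hjoint : ∀ x y, (μ {ω | X ω ≤ x ∧ Y ω ≤ y}).toReal = C (FX x) (FY y))
    {a b : ℝ} (hab : a ≤ b) :
    ((FX b - FX a) - (C (FX b) (FY b) - C (FX a) (FY b)) ≤
        (μ {ω | X ω ≤ b ∧ X ω ≤ Y ω}).toReal - (μ {ω | X ω ≤ a ∧ X ω ≤ Y ω}).toReal) ∧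
      ((μ {ω | X ω ≤ b ∧ X ω ≤ Y ω}).toReal - (μ {ω | X ω ≤ a ∧ X ω ≤ Y ω}).toReal ≤
        (FX b - FX a) - (C (FX b) (FY a) - C (FX a) (FY a))) := by
  set Q : Set Ω := {ω | X ω ≤ b} \ {ω | X ω ≤ a} with hQ
  have mXa : ∀ t : ℝ, MeasurableSet {ω | X ω ≤ t} := fun t => hX measurableSet_Iic
  have mXY : MeasurableSet {ω | X ω ≤ Y ω} := measurableSet_le hX hY
  have mE : ∀ s t : ℝ, MeasurableSet {ω | X ω ≤ t ∧ Y ω ≤ s} :=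
    fun s t => (mXa t).inter (hY measurableSet_Iic)
  have hTs : ∀ s : ℝ, (μ (Q \ {ω | Y ω ≤ s})).toReal
      = (FX b - FX a) - (C (FX b) (FY s) - C (FX a) (FY s)) := by
    intro s
    have h1 : (μ {ω | X ω ≤ b}).toReal = (μ {ω | X ω ≤ a}).toReal + (μ Q).toReal :=
      toReal_split μ (mXa a) (fun ω h => le_trans h hab)
    have h2 : (μ {ω | X ω ≤ b ∧ Y ω ≤ s}).toReal
        = (μ {ω | X ω ≤ a ∧ Y ω ≤ s}).toReal + (μ (Q ∩ {ω | Y ω ≤ s})).toReal := by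
      have hset : {ω | X ω ≤ b ∧ Y ω ≤ s} \ {ω | X ω ≤ a ∧ Y ω ≤ s}
          = Q ∩ {ω | Y ω ≤ s} := by
        ext ω
        simp only [hQ, Set.mem_diff, Set.mem_setOf_eq, Set.mem_inter_iff]
        tauto
      rw [← hset]
      exact toReal_split μ (mE s a) (fun ω h => ⟨le_trans h.1 hab, h.2⟩)
    have h3 : (μ Q).toReal
        = (μ (Q ∩ {ω | Y ω ≤ s})).toReal + (μ (Q \ {ω | Y ω ≤ s})).toReal :=
      toReal_inter_diff μ Q (hY measurableSet_Iic)
    have e1 := hFX a; have e2 := hFX b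
    have e3 := hjoint a s; have e4 := hjoint b s
    linarith
  have hsub : {ω | X ω ≤ a ∧ X ω ≤ Y ω} ⊆ {ω | X ω ≤ b ∧ X ω ≤ Y ω} :=
    fun ω h => ⟨le_trans h.1 hab, h.2⟩
  have mS : ∀ t : ℝ, MeasurableSet {ω | X ω ≤ t ∧ X ω ≤ Y ω} :=
    fun t => (mXa t).inter mXY
  have hD : (μ {ω | X ω ≤ b ∧ X ω ≤ Y ω}).toReal - (μ {ω | X ω ≤ a ∧ X ω ≤ Y ω}).toReal
      = (μ ({ω | X ω ≤ b ∧ X ω ≤ Y ω} \ {ω | X ω ≤ a ∧ X ω ≤ Y ω})).toReal := by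
    have := toReal_split μ (mS a) hsub
    linarith
  have hinc1 : Q \ {ω | Y ω ≤ b} ⊆
      {ω | X ω ≤ b ∧ X ω ≤ Y ω} \ {ω | X ω ≤ a ∧ X ω ≤ Y ω} := by
    rintro ω ⟨⟨hb', ha'⟩, hyb⟩
    refine ⟨⟨hb', le_trans hb' (le_of_lt (not_le.mp hyb))⟩, fun hcon => ha' hcon.1⟩
  have hinc2 : {ω | X ω ≤ b ∧ X ω ≤ Y ω} \ {ω | X ω ≤ a ∧ X ω ≤ Y ω} ⊆
      Q \ {ω | Y ω ≤ a} := by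
    rintro ω ⟨⟨hxb, hxy⟩, hn⟩
    have hxa : ¬ X ω ≤ a := fun h => hn ⟨h, hxy⟩
    exact ⟨⟨hxb, hxa⟩, fun h => hxa (le_trans hxy h)⟩
  have m1 : (μ (Q \ {ω | Y ω ≤ b})).toReal ≤
      (μ ({ω | X ω ≤ b ∧ X ω ≤ Y ω} \ {ω | X ω ≤ a ∧ X ω ≤ Y ω})).toReal :=
    ENNReal.toReal_mono (measure_ne_top μ _) (measure_mono hinc1)
  have m2 : (μ ({ω | X ω ≤ b ∧ X ω ≤ Y ω} \ {ω | X ω ≤ a ∧ X ω ≤ Y ω})).toReal ≤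
      (μ (Q \ {ω | Y ω ≤ a})).toReal :=
    ENNReal.toReal_mono (measure_ne_top μ _) (measure_mono hinc2)
  constructor
  · have := hTs b; linarith
  · have := hTs a; linarith

lemma boundsY {Ω : Type*} [MeasurableSpace Ω] (μ : Measure Ω) [IsProbabilityMeasure μ]
    {X Y : Ω → ℝ} (hX : Measurable X) (hY : Measurable Y)
    {FX FY : ℝ → ℝ} {C : ℝ → ℝ → ℝ}
    (hFY : ∀ y, FY y = (μ {ω | Y ω ≤ y}).toReal)
    (hjoint : ∀ x y, (μ {ω | X ω ≤ x ∧ Y ω ≤ y}).toReal = C (FX x) (FY y))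
    {a b : ℝ} (hab : a ≤ b) :
    ((FY b - FY a) - (C (FX b) (FY b) - C (FX b) (FY a)) ≤
        (μ {ω | Y ω ≤ b ∧ ¬ X ω ≤ Y ω}).toReal - (μ {ω | Y ω ≤ a ∧ ¬ X ω ≤ Y ω}).toReal) ∧
      ((μ {ω | Y ω ≤ b ∧ ¬ X ω ≤ Y ω}).toReal - (μ {ω | Y ω ≤ a ∧ ¬ X ω ≤ Y ω}).toReal ≤
        (FY b - FY a) - (C (FX a) (FY b) - C (FX a) (FY a))) := by
  set Q : Set Ω := {ω | Y ω ≤ b} \ {ω | Y ω ≤ a} with hQ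
  have mYa : ∀ t : ℝ, MeasurableSet {ω | Y ω ≤ t} := fun t => hY measurableSet_Iic
  have mXY : MeasurableSet {ω | X ω ≤ Y ω} := measurableSet_le hX hY
  have mE : ∀ s t : ℝ, MeasurableSet {ω | X ω ≤ s ∧ Y ω ≤ t} :=
    fun s t => (hX measurableSet_Iic).inter (mYa t)
  have hTs : ∀ s : ℝ, (μ (Q \ {ω | X ω ≤ s})).toReal
      = (FY b - FY a) - (C (FX s) (FY b) - C (FX s) (FY a)) := by
    intro s
    have h1 : (μ {ω | Y ω ≤ b}).toReal = (μ {ω | Y ω ≤ a}).toReal + (μ Q).toReal :=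
      toReal_split μ (mYa a) (fun ω h => le_trans h hab)
    have h2 : (μ {ω | X ω ≤ s ∧ Y ω ≤ b}).toReal
        = (μ {ω | X ω ≤ s ∧ Y ω ≤ a}).toReal + (μ (Q ∩ {ω | X ω ≤ s})).toReal := by
      have hset : {ω | X ω ≤ s ∧ Y ω ≤ b} \ {ω | X ω ≤ s ∧ Y ω ≤ a}
          = Q ∩ {ω | X ω ≤ s} := by
        ext ω
        simp only [hQ, Set.mem_diff, Set.mem_setOf_eq, Set.mem_inter_iff]
        tauto
      rw [← hset]
      exact toReal_split μ (mE s a) (fun ω h => ⟨h.1, le_trans h.2 hab⟩)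
    have h3 : (μ Q).toReal
        = (μ (Q ∩ {ω | X ω ≤ s})).toReal + (μ (Q \ {ω | X ω ≤ s})).toReal :=
      toReal_inter_diff μ Q (hX measurableSet_Iic)
    have e1 := hFY a; have e2 := hFY b
    have e3 := hjoint s a; have e4 := hjoint s b
    linarith
  have hsub : {ω | Y ω ≤ a ∧ ¬ X ω ≤ Y ω} ⊆ {ω | Y ω ≤ b ∧ ¬ X ω ≤ Y ω} :=
    fun ω h => ⟨le_trans h.1 hab, h.2⟩
  have mS : ∀ t : ℝ, MeasurableSet {ω | Y ω ≤ t ∧ ¬ X ω ≤ Y ω} :=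
    fun t => (mYa t).inter mXY.compl
  have hD : (μ {ω | Y ω ≤ b ∧ ¬ X ω ≤ Y ω}).toReal - (μ {ω | Y ω ≤ a ∧ ¬ X ω ≤ Y ω}).toReal
      = (μ ({ω | Y ω ≤ b ∧ ¬ X ω ≤ Y ω} \ {ω | Y ω ≤ a ∧ ¬ X ω ≤ Y ω})).toReal := by
    have := toReal_split μ (mS a) hsub
    linarith
  have hinc1 : Q \ {ω | X ω ≤ b} ⊆
      {ω | Y ω ≤ b ∧ ¬ X ω ≤ Y ω} \ {ω | Y ω ≤ a ∧ ¬ X ω ≤ Y ω} := by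
    rintro ω ⟨⟨hb', ha'⟩, hxb⟩
    refine ⟨⟨hb', fun h => hxb (le_trans h hb')⟩, fun hcon => ha' hcon.1⟩
  have hinc2 : {ω | Y ω ≤ b ∧ ¬ X ω ≤ Y ω} \ {ω | Y ω ≤ a ∧ ¬ X ω ≤ Y ω} ⊆
      Q \ {ω | X ω ≤ a} := by
    rintro ω ⟨⟨hyb, hnxy⟩, hn⟩
    have hya : ¬ Y ω ≤ a := fun h => hn ⟨h, hnxy⟩
    exact ⟨⟨hyb, hya⟩, fun h => hnxy (le_of_lt (lt_of_le_of_lt h (not_le.mp hya)))⟩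
  have m1 : (μ (Q \ {ω | X ω ≤ b})).toReal ≤
      (μ ({ω | Y ω ≤ b ∧ ¬ X ω ≤ Y ω} \ {ω | Y ω ≤ a ∧ ¬ X ω ≤ Y ω})).toReal :=
    ENNReal.toReal_mono (measure_ne_top μ _) (measure_mono hinc1)
  have m2 : (μ ({ω | Y ω ≤ b ∧ ¬ X ω ≤ Y ω} \ {ω | Y ω ≤ a ∧ ¬ X ω ≤ Y ω})).toReal ≤
      (μ (Q \ {ω | X ω ≤ a})).toReal :=
    ENNReal.toReal_mono (measure_ne_top μ _) (measure_mono hinc2)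
  constructor
  · have := hTs b; linarith
  · have := hTs a; linarith

lemma tendsto_zero_aux {Ω : Type*} [MeasurableSpace Ω] (μ : Measure Ω) [IsFiniteMeasure μ]
    {Z : Ω → ℝ} (hZ : Measurable Z) (P : Ω → Prop) (hS : MeasurableSet {ω | P ω}) :
    Tendsto (fun n : ℕ => (μ {ω | Z ω ≤ -(n:ℝ) ∧ P ω}).toReal) atTop (𝓝 0) := by
  have hmeas : ∀ n : ℕ, NullMeasurableSet {ω | Z ω ≤ -(n:ℝ) ∧ P ω} μ := fun n =>
    (MeasurableSet.nullMeasurableSet ((hZ measurableSet_Iic).inter hS))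
  have hanti : Antitone fun n : ℕ => {ω | Z ω ≤ -(n:ℝ) ∧ P ω} := by
    intro n m hnm ω hω
    exact ⟨le_trans hω.1 (neg_le_neg (Nat.cast_le.2 hnm)), hω.2⟩
  have h0 : (⋂ n : ℕ, {ω | Z ω ≤ -(n:ℝ) ∧ P ω}) = ∅ := by
    ext ω
    simp only [Set.mem_iInter, Set.mem_setOf_eq, Set.mem_empty_iff_false, iff_false, not_forall]
    obtain ⟨n, hn⟩ := exists_nat_gt (-Z ω)
    exact ⟨n, fun hcon => absurd hcon.1 (not_le.2 (by linarith))⟩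
  have h := tendsto_measure_iInter_atTop hmeas hanti ⟨0, measure_ne_top μ _⟩
  rw [h0, measure_empty] at h
  have := (ENNReal.tendsto_toReal (by simp : (0:ENNReal) ≠ ⊤)).comp h
  simpa [Function.comp_def] using this

lemma setA {Ω : Type*} (X Y : Ω → ℝ) (t : ℝ) :
    {ω | min (X ω) (Y ω) ≤ t ∧ X ω ≤ Y ω} = {ω | X ω ≤ t ∧ X ω ≤ Y ω} := by
  ext ω
  constructor
  · rintro ⟨h1, h2⟩; exact ⟨by rwa [min_eq_left h2] at h1, h2⟩
  · rintro ⟨h1, h2⟩; exact ⟨le_trans (min_le_left _ _) h1, h2⟩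

lemma setB {Ω : Type*} (X Y : Ω → ℝ) (t : ℝ) :
    {ω | min (X ω) (Y ω) ≤ t ∧ ¬ X ω ≤ Y ω} = {ω | Y ω ≤ t ∧ ¬ X ω ≤ Y ω} := by
  ext ω
  constructor
  · rintro ⟨h1, h2⟩
    exact ⟨by rwa [min_eq_right (le_of_lt (not_le.mp h2))] at h1, h2⟩
  · rintro ⟨h1, h2⟩; exact ⟨le_trans (min_le_right _ _) h1, h2⟩





lemma mainDeriv {Ω : Type*} [MeasurableSpace Ω] (μ : Measure Ω) [IsProbabilityMeasure μ]
    {X Y : Ω → ℝ} (hX : Measurable X) (hY : Measurable Y)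
    {FX FY fX fY : ℝ → ℝ} {C c : ℝ → ℝ → ℝ}
    (hFX : ∀ x, FX x = (μ {ω | X ω ≤ x}).toReal)
    (hFY : ∀ y, FY y = (μ {ω | Y ω ≤ y}).toReal)
    (hfX : ∀ z, HasDerivAt FX (fX z) z) (hfY : ∀ z, HasDerivAt FY (fY z) z)
    (hccont : Continuous (Function.uncurry c))
    (hC : ∀ a b : ℝ, C a b = ∫ u in (0:ℝ)..a, ∫ v in (0:ℝ)..b, c u v)
    (hjoint : ∀ x y, (μ {ω | X ω ≤ x ∧ Y ω ≤ y}).toReal = C (FX x) (FY y)) :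
    (∀ z, HasDerivAt (fun t => (μ {ω | X ω ≤ t ∧ X ω ≤ Y ω}).toReal)
        (fX z - (∫ v in (0:ℝ)..(FY z), c (FX z) v) * fX z) z) ∧
    (∀ z, HasDerivAt (fun t => (μ {ω | Y ω ≤ t ∧ ¬ X ω ≤ Y ω}).toReal)
        (fY z - (∫ v in (0:ℝ)..(FX z), c v (FY z)) * fY z) z) := by
  have hFYc : Continuous FY := continuous_iff_continuousAt.2 fun x => (hfY x).continuousAt
  have hFXc : Continuous FX := continuous_iff_continuousAt.2 fun x => (hfX x).continuousAt
  constructor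
  · intro z
    exact keyDeriv hccont hC hfX hFYc
      (fun a b hab => (boundsX μ hX hY hFX hjoint hab).1)
      (fun a b hab => (boundsX μ hX hY hFX hjoint hab).2) z
  · intro z
    have hc' : Continuous (Function.uncurry fun p q => c q p) :=
      hccont.comp continuous_swap
    have hC' : ∀ a b : ℝ, C b a = ∫ u in (0:ℝ)..a, ∫ v in (0:ℝ)..b, c v u := by
      intro a b
      rw [hC b a, double_swap hccont b a]
    exact keyDeriv (c := fun p q => c q p) (C := fun p q => C q p) hc' hC' hfY hFXc
      (fun a b hab => (boundsY μ hX hY hFY hjoint hab).1)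
      (fun a b hab => (boundsY μ hX hY hFY hjoint hab).2) z


end Stmt17Aux

open Set MeasureTheory intervalIntegral

/-- Two copulas `C, C'` with (continuous) densities, combined with the same known
differentiable margins `F_X, F_Y`, induce the same joint distribution of
`(Z, Δ) = (min(X,Y), 1_{X ≤ Y})` if and only if both partial derivatives
`∂ₓ C(F_X(x), F_Y(z))|_{x=z}` and `∂_y C(F_X(z), F_Y(y))|_{y=z}` of the two copulas
coincide for every `z`. -/
theorem stmt17 {Ω Ω' : Type*} [MeasurableSpace Ω] [MeasurableSpace Ω']
    (μ : Measure Ω) [IsProbabilityMeasure μ] (μ' : Measure Ω') [IsProbabilityMeasure μ']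
    (X Y : Ω → ℝ) (X' Y' : Ω' → ℝ)
    (hX : Measurable X) (hY : Measurable Y) (hX' : Measurable X') (hY' : Measurable Y')
    (FX FY fX fY : ℝ → ℝ) (C c C₂ c₂ : ℝ → ℝ → ℝ)
    -- common differentiable margins
    (hFX : ∀ x, FX x = (μ {ω | X ω ≤ x}).toReal)
    (hFY : ∀ y, FY y = (μ {ω | Y ω ≤ y}).toReal)
    (hFX' : ∀ x, FX x = (μ' {ω | X' ω ≤ x}).toReal)
    (hFY' : ∀ y, FY y = (μ' {ω | Y' ω ≤ y}).toReal)
    (hfX : ∀ z, HasDerivAt FX (fX z) z)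
    (hfY : ∀ z, HasDerivAt FY (fY z) z)
    -- the copulas and their densities
    (hcnn : ∀ u v, 0 ≤ c u v) (hccont : Continuous (Function.uncurry c))
    (hC : ∀ a b : ℝ, C a b = ∫ u in (0:ℝ)..a, ∫ v in (0:ℝ)..b, c u v)
    (hmarg1 : ∀ u ∈ Icc (0:ℝ) 1, ∫ v in (0:ℝ)..1, c u v = 1)
    (hmarg2 : ∀ v ∈ Icc (0:ℝ) 1, ∫ u in (0:ℝ)..1, c u v = 1)
    (hcnn₂ : ∀ u v, 0 ≤ c₂ u v) (hccont₂ : Continuous (Function.uncurry c₂))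
    (hC₂ : ∀ a b : ℝ, C₂ a b = ∫ u in (0:ℝ)..a, ∫ v in (0:ℝ)..b, c₂ u v)
    (hmarg1₂ : ∀ u ∈ Icc (0:ℝ) 1, ∫ v in (0:ℝ)..1, c₂ u v = 1)
    (hmarg2₂ : ∀ v ∈ Icc (0:ℝ) 1, ∫ u in (0:ℝ)..1, c₂ u v = 1)
    -- joint laws given by the copulas
    (hjoint : ∀ x y, (μ {ω | X ω ≤ x ∧ Y ω ≤ y}).toReal = C (FX x) (FY y))
    (hjoint' : ∀ x y, (μ' {ω | X' ω ≤ x ∧ Y' ω ≤ y}).toReal = C₂ (FX x) (FY y)) :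
    ((∀ z : ℝ,
        μ {ω | min (X ω) (Y ω) ≤ z ∧ X ω ≤ Y ω}
          = μ' {ω | min (X' ω) (Y' ω) ≤ z ∧ X' ω ≤ Y' ω} ∧
        μ {ω | min (X ω) (Y ω) ≤ z ∧ ¬ X ω ≤ Y ω}
          = μ' {ω | min (X' ω) (Y' ω) ≤ z ∧ ¬ X' ω ≤ Y' ω})
      ↔
      (∀ z : ℝ,
        deriv (fun x => C (FX x) (FY z)) z = deriv (fun x => C₂ (FX x) (FY z)) z ∧
        deriv (fun y => C (FX z) (FY y)) z = deriv (fun y => C₂ (FX z) (FY y)) z)) := by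
  obtain ⟨hA1, hB1⟩ := Stmt17Aux.mainDeriv μ hX hY hFX hFY hfX hfY hccont hC hjoint
  obtain ⟨hA2, hB2⟩ := Stmt17Aux.mainDeriv μ' hX' hY' hFX' hFY' hfX hfY hccont₂ hC₂ hjoint'
  have d1 : ∀ z, HasDerivAt (fun x => C (FX x) (FY z))
      ((∫ v in (0:ℝ)..(FY z), c (FX z) v) * fX z) z := fun z =>
    (Stmt17Aux.hasDerivAt_fst hccont hC (FX z) (FY z)).comp z (hfX z)
  have d1₂ : ∀ z, HasDerivAt (fun x => C₂ (FX x) (FY z))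
      ((∫ v in (0:ℝ)..(FY z), c₂ (FX z) v) * fX z) z := fun z =>
    (Stmt17Aux.hasDerivAt_fst hccont₂ hC₂ (FX z) (FY z)).comp z (hfX z)
  have d2 : ∀ z, HasDerivAt (fun y => C (FX z) (FY y))
      ((∫ v in (0:ℝ)..(FX z), c v (FY z)) * fY z) z := by
    intro z
    have hc' : Continuous (Function.uncurry fun p q => c q p) := hccont.comp continuous_swap
    have hC' : ∀ a b : ℝ, C b a = ∫ u in (0:ℝ)..a, ∫ v in (0:ℝ)..b, c v u := fun a b => by
      rw [hC b a, Stmt17Aux.double_swap hccont b a]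
    exact (Stmt17Aux.hasDerivAt_fst (c := fun p q => c q p) (C := fun p q => C q p) hc' hC'
      (FY z) (FX z)).comp z (hfY z)
  have d2₂ : ∀ z, HasDerivAt (fun y => C₂ (FX z) (FY y))
      ((∫ v in (0:ℝ)..(FX z), c₂ v (FY z)) * fY z) z := by
    intro z
    have hc' : Continuous (Function.uncurry fun p q => c₂ q p) := hccont₂.comp continuous_swap
    have hC' : ∀ a b : ℝ, C₂ b a = ∫ u in (0:ℝ)..a, ∫ v in (0:ℝ)..b, c₂ v u := fun a b => by
      rw [hC₂ b a, Stmt17Aux.double_swap hccont₂ b a]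
    exact (Stmt17Aux.hasDerivAt_fst (c := fun p q => c₂ q p) (C := fun p q => C₂ q p) hc' hC'
      (FY z) (FX z)).comp z (hfY z)
  constructor
  · intro h z
    constructor
    · have hfun : (fun t => (μ {ω | X ω ≤ t ∧ X ω ≤ Y ω}).toReal)
          = (fun t => (μ' {ω | X' ω ≤ t ∧ X' ω ≤ Y' ω}).toReal) := by
        funext t
        rw [← Stmt17Aux.setA X Y t, ← Stmt17Aux.setA X' Y' t, (h t).1]
      have h2 := hA2 z
      rw [← hfun] at h2
      have hu := HasDerivAt.unique (hA1 z) h2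
      rw [(d1 z).deriv, (d1₂ z).deriv]
      linarith
    · have hfun : (fun t => (μ {ω | Y ω ≤ t ∧ ¬ X ω ≤ Y ω}).toReal)
          = (fun t => (μ' {ω | Y' ω ≤ t ∧ ¬ X' ω ≤ Y' ω}).toReal) := by
        funext t
        rw [← Stmt17Aux.setB X Y t, ← Stmt17Aux.setB X' Y' t, (h t).2]
      have h2 := hB2 z
      rw [← hfun] at h2
      have hu := HasDerivAt.unique (hB1 z) h2
      rw [(d2 z).deriv, (d2₂ z).deriv]
      linarith
  · intro h z
    constructor
    · rw [Stmt17Aux.setA X Y z, Stmt17Aux.setA X' Y' z]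
      have hE : ∀ t : ℝ, (∫ v in (0:ℝ)..(FY t), c (FX t) v) * fX t
          = (∫ v in (0:ℝ)..(FY t), c₂ (FX t) v) * fX t := by
        intro t
        rw [← (d1 t).deriv, ← (d1₂ t).deriv]
        exact (h t).1
      have hzero : ∀ t, HasDerivAt (fun w => (μ {ω | X ω ≤ w ∧ X ω ≤ Y ω}).toReal
          - (μ' {ω | X' ω ≤ w ∧ X' ω ≤ Y' ω}).toReal) 0 t := by
        intro t
        have h0 := (hA1 t).sub (hA2 t)
        have he : (fX t - (∫ v in (0:ℝ)..(FY t), c (FX t) v) * fX t)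
            - (fX t - (∫ v in (0:ℝ)..(FY t), c₂ (FX t) v) * fX t) = 0 := by
          rw [hE t]; ring
        rwa [he] at h0
      have hconst : ∀ t, (μ {ω | X ω ≤ t ∧ X ω ≤ Y ω}).toReal
          - (μ' {ω | X' ω ≤ t ∧ X' ω ≤ Y' ω}).toReal
          = (μ {ω | X ω ≤ z ∧ X ω ≤ Y ω}).toReal
          - (μ' {ω | X' ω ≤ z ∧ X' ω ≤ Y' ω}).toReal := fun t =>
        is_const_of_deriv_eq_zero (fun x => (hzero x).differentiableAt)
          (fun x => (hzero x).deriv) t z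
      have hl1 := Stmt17Aux.tendsto_zero_aux μ hX (fun ω => X ω ≤ Y ω)
        (measurableSet_le hX hY)
      have hl2 := Stmt17Aux.tendsto_zero_aux μ' hX' (fun ω => X' ω ≤ Y' ω)
        (measurableSet_le hX' hY')
      have hdiff0 : Filter.Tendsto (fun n : ℕ => (μ {ω | X ω ≤ -(n:ℝ) ∧ X ω ≤ Y ω}).toReal
          - (μ' {ω | X' ω ≤ -(n:ℝ) ∧ X' ω ≤ Y' ω}).toReal) Filter.atTop (nhds 0) := by
        simpa using hl1.sub hl2
      have hconstseq : Filter.Tendsto (fun n : ℕ => (μ {ω | X ω ≤ -(n:ℝ) ∧ X ω ≤ Y ω}).toReal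
          - (μ' {ω | X' ω ≤ -(n:ℝ) ∧ X' ω ≤ Y' ω}).toReal) Filter.atTop
          (nhds ((μ {ω | X ω ≤ z ∧ X ω ≤ Y ω}).toReal
            - (μ' {ω | X' ω ≤ z ∧ X' ω ≤ Y' ω}).toReal)) := by
        have heqf : (fun n : ℕ => (μ {ω | X ω ≤ -(n:ℝ) ∧ X ω ≤ Y ω}).toReal
            - (μ' {ω | X' ω ≤ -(n:ℝ) ∧ X' ω ≤ Y' ω}).toReal)
            = fun _ : ℕ => (μ {ω | X ω ≤ z ∧ X ω ≤ Y ω}).toReal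
              - (μ' {ω | X' ω ≤ z ∧ X' ω ≤ Y' ω}).toReal :=
          funext fun n => hconst (-(n:ℝ))
        rw [heqf]
        exact tendsto_const_nhds
      have huniq := tendsto_nhds_unique hconstseq hdiff0
      have heq : (μ {ω | X ω ≤ z ∧ X ω ≤ Y ω}).toReal
          = (μ' {ω | X' ω ≤ z ∧ X' ω ≤ Y' ω}).toReal := by linarith
      exact (ENNReal.toReal_eq_toReal_iff' (measure_ne_top μ _) (measure_ne_top μ' _)).1 heq
    · rw [Stmt17Aux.setB X Y z, Stmt17Aux.setB X' Y' z]
      have hE : ∀ t : ℝ, (∫ v in (0:ℝ)..(FX t), c v (FY t)) * fY t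
          = (∫ v in (0:ℝ)..(FX t), c₂ v (FY t)) * fY t := by
        intro t
        rw [← (d2 t).deriv, ← (d2₂ t).deriv]
        exact (h t).2
      have hzero : ∀ t, HasDerivAt (fun w => (μ {ω | Y ω ≤ w ∧ ¬ X ω ≤ Y ω}).toReal
          - (μ' {ω | Y' ω ≤ w ∧ ¬ X' ω ≤ Y' ω}).toReal) 0 t := by
        intro t
        have h0 := (hB1 t).sub (hB2 t)
        have he : (fY t - (∫ v in (0:ℝ)..(FX t), c v (FY t)) * fY t)
            - (fY t - (∫ v in (0:ℝ)..(FX t), c₂ v (FY t)) * fY t) = 0 := by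
          rw [hE t]; ring
        rwa [he] at h0
      have hconst : ∀ t, (μ {ω | Y ω ≤ t ∧ ¬ X ω ≤ Y ω}).toReal
          - (μ' {ω | Y' ω ≤ t ∧ ¬ X' ω ≤ Y' ω}).toReal
          = (μ {ω | Y ω ≤ z ∧ ¬ X ω ≤ Y ω}).toReal
          - (μ' {ω | Y' ω ≤ z ∧ ¬ X' ω ≤ Y' ω}).toReal := fun t =>
        is_const_of_deriv_eq_zero (fun x => (hzero x).differentiableAt)
          (fun x => (hzero x).deriv) t z
      have hl1 := Stmt17Aux.tendsto_zero_aux μ hY (fun ω => ¬ X ω ≤ Y ω)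
        ((measurableSet_le hX hY).compl)
      have hl2 := Stmt17Aux.tendsto_zero_aux μ' hY' (fun ω => ¬ X' ω ≤ Y' ω)
        ((measurableSet_le hX' hY').compl)
      have hdiff0 : Filter.Tendsto (fun n : ℕ => (μ {ω | Y ω ≤ -(n:ℝ) ∧ ¬ X ω ≤ Y ω}).toReal
          - (μ' {ω | Y' ω ≤ -(n:ℝ) ∧ ¬ X' ω ≤ Y' ω}).toReal) Filter.atTop (nhds 0) := by
        simpa using hl1.sub hl2
      have hconstseq : Filter.Tendsto (fun n : ℕ => (μ {ω | Y ω ≤ -(n:ℝ) ∧ ¬ X ω ≤ Y ω}).toReal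
          - (μ' {ω | Y' ω ≤ -(n:ℝ) ∧ ¬ X' ω ≤ Y' ω}).toReal) Filter.atTop
          (nhds ((μ {ω | Y ω ≤ z ∧ ¬ X ω ≤ Y ω}).toReal
            - (μ' {ω | Y' ω ≤ z ∧ ¬ X' ω ≤ Y' ω}).toReal)) := by
        have heqf : (fun n : ℕ => (μ {ω | Y ω ≤ -(n:ℝ) ∧ ¬ X ω ≤ Y ω}).toReal
            - (μ' {ω | Y' ω ≤ -(n:ℝ) ∧ ¬ X' ω ≤ Y' ω}).toReal)
            = fun _ : ℕ => (μ {ω | Y ω ≤ z ∧ ¬ X ω ≤ Y ω}).toReal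
              - (μ' {ω | Y' ω ≤ z ∧ ¬ X' ω ≤ Y' ω}).toReal :=
          funext fun n => hconst (-(n:ℝ))
        rw [heqf]
        exact tendsto_const_nhds
      have huniq := tendsto_nhds_unique hconstseq hdiff0
      have heq : (μ {ω | Y ω ≤ z ∧ ¬ X ω ≤ Y ω}).toReal
          = (μ' {ω | Y' ω ≤ z ∧ ¬ X' ω ≤ Y' ω}).toReal := by linarith
      exact (ENNReal.toReal_eq_toReal_iff' (measure_ne_top μ _) (measure_ne_top μ' _)).1 heq
end
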